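/- For every ψ ∈ L²(ℝ^m), the integral defining the Bargmann transform B(ψ)(z) converges absolutely for every z ∈ ℂ^m, the resulting function B(ψ) is holomorphic on all of ℂ^m, and it satisfies the pointwise bound |B(ψ)(z)| ≤ e^{|z|²/(4ℏ)} · ‖ψ‖_{L²} for every z ∈ ℂ^m. -/

import Mathlib

open Complex MeasureTheory Finset
open scoped ENNReal NNReal

noncomputable section

/-- The Bargmann kernel `exp(−(1/(4ℏ))(4i q·z + 2|q|² − z·z))`. -/
def bKer (m : ℕ) (h : ℝ) (q : Fin m → ℝ) (z : Fin m → ℂ) : ℂ :=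
  Complex.exp (-(1 / (4 * (h : ℂ))) *
    (4 * Complex.I * (∑ j, (q j : ℂ) * z j) + 2 * (∑ j, ((q j : ℂ))^2) - ∑ j, (z j)^2))

/-- The Bargmann transform `B(ψ)(z) = (πℏ)^{-m/4} ∫ ψ(q) exp(−(1/(4ℏ))(4i q·z + 2|q|² − z·z)) dq`. -/
def barg (m : ℕ) (h : ℝ) (ψ : (Fin m → ℝ) → ℂ) (z : Fin m → ℂ) : ℂ :=
  (((Real.pi * h) ^ (-(m : ℝ) / 4) : ℝ) : ℂ) * ∫ q : Fin m → ℝ, ψ q * bKer m h q z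

/-- A function on `ℂ^m` is holomorphic if it is complex-differentiable in each variable. -/
def HoloEach {m : ℕ} (f : (Fin m → ℂ) → ℂ) : Prop :=
  ∀ (z : Fin m → ℂ) (j : Fin m),
    DifferentiableAt ℂ (fun w : ℂ => f (Function.update z j w)) (z j)

lemma re_aux {m : ℕ} (h : ℝ) (hh : 0 < h) (q : Fin m → ℝ) (z : Fin m → ℂ) :
    (-(1 / (4 * (h : ℂ))) *
      (4 * Complex.I * (∑ j, (q j : ℂ) * z j) + 2 * (∑ j, ((q j : ℂ))^2) - ∑ j, (z j)^2)).re
    = (∑ j, Complex.normSq (z j)) / (4 * h) - (∑ j, (q j - (z j).im)^2) / (2 * h) := by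
  have hsum : (4 * Complex.I * (∑ j, (q j : ℂ) * z j) + 2 * (∑ j, ((q j : ℂ))^2)
      - ∑ j, (z j)^2)
      = ∑ j, (4 * Complex.I * ((q j : ℂ) * z j) + 2 * ((q j : ℂ))^2 - (z j)^2) := by
    rw [Finset.mul_sum, Finset.mul_sum, ← Finset.sum_add_distrib, ← Finset.sum_sub_distrib]
  rw [hsum, Finset.mul_sum, Complex.re_sum, Finset.sum_div, Finset.sum_div,
    ← Finset.sum_sub_distrib]
  refine Finset.sum_congr rfl fun j _ => ?_
  have hcast : (-(1 / (4 * (h : ℂ)))) = ((-(1 / (4 * h)) : ℝ) : ℂ) := by push_cast; ring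
  rw [hcast, Complex.re_ofReal_mul]
  have : (4 * Complex.I * ((q j : ℂ) * z j) + 2 * ((q j : ℂ))^2 - (z j)^2).re
      = -(4 * q j * (z j).im) + 2 * (q j)^2 - ((z j).re^2 - (z j).im^2) := by
    simp [Complex.mul_re, Complex.mul_im, pow_two]
    ring
  rw [this, Complex.normSq_apply]
  field_simp
  ring

lemma norm_bKer {m : ℕ} (h : ℝ) (hh : 0 < h) (q : Fin m → ℝ) (z : Fin m → ℂ) :
    ‖bKer m h q z‖ = Real.exp ((∑ j, Complex.normSq (z j)) / (4 * h))
      * Real.exp (-((∑ j, (q j - (z j).im)^2) / (2 * h))) := by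
  rw [bKer, Complex.norm_exp, re_aux h hh, ← Real.exp_add]
  congr 1


lemma integrable_gauss (m : ℕ) (c : ℝ) (hc : 0 < c) :
    Integrable (fun q : Fin m → ℝ => Real.exp (-c * ∑ j, (q j)^2)) := by
  have : (fun q : Fin m → ℝ => Real.exp (-c * ∑ j, (q j)^2))
      = fun q => ∏ j, Real.exp (-c * (q j)^2) := by
    funext q
    rw [← Real.exp_sum, ← Finset.mul_sum]
  rw [this]
  exact MeasureTheory.Integrable.fintype_prod (fun _ => integrable_exp_neg_mul_sq hc)

lemma integral_gauss (m : ℕ) (c : ℝ) (hc : 0 < c) :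
    ∫ q : Fin m → ℝ, Real.exp (-c * ∑ j, (q j)^2) = Real.sqrt (Real.pi / c) ^ m := by
  have : (fun q : Fin m → ℝ => Real.exp (-c * ∑ j, (q j)^2))
      = fun q => ∏ j, Real.exp (-c * (q j)^2) := by
    funext q
    rw [← Real.exp_sum, ← Finset.mul_sum]
  rw [this, MeasureTheory.volume_pi, MeasureTheory.integral_fintype_prod_eq_pow (ι := Fin m)
    (fun x : ℝ => Real.exp (-c * x^2)), integral_gaussian, Fintype.card_fin]

lemma integrable_norm_mul_norm {α : Type*} [MeasurableSpace α] {μ : Measure α}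
    {E F : Type*} [NormedAddCommGroup E] [NormedAddCommGroup F]
    {f : α → E} {g : α → F} (hf : MemLp f 2 μ) (hg : MemLp g 2 μ) :
    Integrable (fun x => ‖f x‖ * ‖g x‖) μ := by
  have h1 : Integrable (fun x => ‖f x‖ ^ 2) μ :=
    (memLp_two_iff_integrable_sq_norm hf.1).1 hf
  have h2 : Integrable (fun x => ‖g x‖ ^ 2) μ :=
    (memLp_two_iff_integrable_sq_norm hg.1).1 hg
  refine (h1.add h2).mono' (hf.1.norm.mul hg.1.norm) ?_
  filter_upwards with x
  have h3 : 0 ≤ ‖f x‖ := norm_nonneg _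
  have h4 : 0 ≤ ‖g x‖ := norm_nonneg _
  rw [Real.norm_eq_abs, _root_.abs_of_nonneg (mul_nonneg h3 h4)]
  simp only [Pi.add_apply]
  nlinarith [sq_nonneg (‖f x‖ - ‖g x‖)]

lemma continuous_gaussExp {m : ℕ} (c : ℝ) (y : Fin m → ℝ) :
    Continuous (fun q : Fin m → ℝ => Real.exp (-c * ∑ j, (q j - y j)^2)) := by
  fun_prop

lemma memLp_gauss_shift {m : ℕ} {c : ℝ} (hc : 0 < c) (y : Fin m → ℝ) :
    MemLp (fun q : Fin m → ℝ => Real.exp (-c * ∑ j, (q j - y j)^2)) 2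
      (volume : Measure (Fin m → ℝ)) := by
  rw [memLp_two_iff_integrable_sq (continuous_gaussExp c y).aestronglyMeasurable]
  have heq : (fun q : Fin m → ℝ => Real.exp (-c * ∑ j, (q j - y j)^2) ^ 2)
      = fun q : Fin m → ℝ =>
        (fun p : Fin m → ℝ => Real.exp (-(2*c) * ∑ j, (p j)^2)) (q - y) := by
    funext q
    rw [← Real.exp_nat_mul]
    simp only [Pi.sub_apply]
    congr 1
    push_cast
    ring
  rw [heq]
  exact (integrable_gauss m (2*c) (by positivity)).comp_sub_right y

lemma integral_gauss_shift {m : ℕ} {c : ℝ} (hc : 0 < c) (y : Fin m → ℝ) :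
    ∫ q : Fin m → ℝ, Real.exp (-c * ∑ j, (q j - y j)^2)
      = Real.sqrt (Real.pi / c) ^ m := by
  have heq : (fun q : Fin m → ℝ => Real.exp (-c * ∑ j, (q j - y j)^2))
      = fun q : Fin m → ℝ =>
        (fun p : Fin m → ℝ => Real.exp (-c * ∑ j, (p j)^2)) (q - y) := by
    funext q
    simp only [Pi.sub_apply]
  rw [heq, integral_sub_right_eq_self (μ := volume)
    (fun p : Fin m → ℝ => Real.exp (-c * ∑ j, (p j)^2)) y]
  exact integral_gauss m c hc

lemma continuous_bKer_q {m : ℕ} (h : ℝ) (z : Fin m → ℂ) :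
    Continuous (fun q : Fin m → ℝ => bKer m h q z) := by
  unfold bKer
  fun_prop

lemma gauss_shift_eq {m : ℕ} (c : ℝ) (y : Fin m → ℝ) (q : Fin m → ℝ) :
    Real.exp (-((∑ j, (q j - y j)^2) / c)) = Real.exp (-(1/c) * ∑ j, (q j - y j)^2) := by
  congr 1
  field_simp

lemma integrable_psi_bKer {m : ℕ} (h : ℝ) (hh : 0 < h) {ψ : (Fin m → ℝ) → ℂ}
    (hψ : MemLp ψ 2 (volume : Measure (Fin m → ℝ))) (z : Fin m → ℂ) :
    Integrable (fun q : Fin m → ℝ => ψ q * bKer m h q z) := by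
  set c := Real.exp ((∑ j, Complex.normSq (z j)) / (4 * h)) with hc
  set G : (Fin m → ℝ) → ℝ :=
    fun q => Real.exp (-(1/(2*h)) * ∑ j, (q j - (z j).im)^2) with hG
  have hGmem : MemLp G 2 (volume : Measure (Fin m → ℝ)) :=
    memLp_gauss_shift (by positivity) _
  have hint : Integrable (fun q : Fin m → ℝ => ‖ψ q‖ * ‖c * G q‖) :=
    integrable_norm_mul_norm hψ (hGmem.const_mul c)
  refine hint.mono' (hψ.1.mul (continuous_bKer_q h z).aestronglyMeasurable) ?_
  filter_upwards with q
  rw [norm_mul, norm_bKer h hh]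
  have : Real.exp (-((∑ j, (q j - (z j).im)^2) / (2 * h))) = G q := gauss_shift_eq _ _ _
  rw [this]
  gcongr
  rw [norm_mul, Real.norm_eq_abs, Real.norm_eq_abs, _root_.abs_of_nonneg (Real.exp_nonneg _),
    _root_.abs_of_nonneg (Real.exp_nonneg _)]

lemma norm_barg_le {m : ℕ} (h : ℝ) (hh : 0 < h) {ψ : (Fin m → ℝ) → ℂ}
    (hψ : MemLp ψ 2 (volume : Measure (Fin m → ℝ))) (z : Fin m → ℂ) :
    ‖barg m h ψ z‖ ≤ Real.exp ((∑ j, Complex.normSq (z j)) / (4 * h)) *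
      (eLpNorm ψ 2 (volume : Measure (Fin m → ℝ))).toReal := by
  have hP : (0:ℝ) < Real.pi * h := by positivity
  set P := Real.pi * h with hPdef
  set c := Real.exp ((∑ j, Complex.normSq (z j)) / (4 * h)) with hcdef
  set y : Fin m → ℝ := fun j => (z j).im with hydef
  set G : (Fin m → ℝ) → ℝ := fun q => Real.exp (-(1/(2*h)) * ∑ j, (q j - y j)^2) with hGdef
  set Nψ := (eLpNorm ψ 2 (volume : Measure (Fin m → ℝ))).toReal with hNdef
  have hGpos : ∀ q, 0 < G q := fun q => Real.exp_pos _
  have hGmem : MemLp G 2 (volume : Measure (Fin m → ℝ)) := memLp_gauss_shift (by positivity) _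
  -- step 5 : Nψ
  have hN : (∫ q : Fin m → ℝ, ‖ψ q‖ ^ (2:ℝ)) ^ ((1:ℝ)/2) = Nψ := by
    rw [hNdef, hψ.eLpNorm_eq_integral_rpow_norm two_ne_zero ENNReal.ofNat_ne_top]
    rw [ENNReal.toReal_ofReal (by positivity)]
    norm_num
  -- step 6 : Gaussian L² norm
  have hG2 : (∫ q : Fin m → ℝ, ‖G q‖ ^ (2:ℝ)) = Real.sqrt P ^ m := by
    have : ∀ q : Fin m → ℝ, ‖G q‖ ^ (2:ℝ) = Real.exp (-(1/h) * ∑ j, (q j - y j)^2) := by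
      intro q
      rw [Real.norm_eq_abs, _root_.abs_of_pos (hGpos q),
        show (2:ℝ) = ((2:ℕ):ℝ) by norm_num, Real.rpow_natCast, hGdef]
      rw [← Real.exp_nat_mul]
      congr 1
      push_cast
      ring
    simp_rw [this]
    rw [integral_gauss_shift (by positivity) y]
    congr 2
    field_simp
    rfl
  have hG2' : (∫ q : Fin m → ℝ, ‖G q‖ ^ (2:ℝ)) ^ ((1:ℝ)/2) = P ^ ((m:ℝ)/4) := by
    rw [hG2, Real.sqrt_eq_rpow, ← Real.rpow_natCast (P ^ ((1:ℝ)/2)) m, ← Real.rpow_mul hP.le,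
      ← Real.rpow_mul (by positivity)]
    congr 1
    ring
  -- Hölder
  have hHold : ∫ q : Fin m → ℝ, ‖ψ q‖ * G q ≤ Nψ * P ^ ((m:ℝ)/4) := by
    rw [← hN, ← hG2']
    have h22 : Real.HolderConjugate 2 2 := Real.HolderConjugate.two_two
    have h2 : (ENNReal.ofReal (2:ℝ)) = 2 := by norm_num
    have := integral_mul_norm_le_Lp_mul_Lq (μ := (volume : Measure (Fin m → ℝ))) h22
      (show MemLp (fun q => ‖ψ q‖) (ENNReal.ofReal 2) volume by rw [h2]; exact hψ.norm)
      (show MemLp G (ENNReal.ofReal 2) volume by rw [h2]; exact hGmem)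
    refine le_trans (le_of_eq ?_) (le_trans this (le_of_eq ?_))
    · refine integral_congr_ae (Filter.Eventually.of_forall fun q => ?_)
      simp only [norm_norm]
      rw [Real.norm_eq_abs, _root_.abs_of_pos (hGpos q)]
    · congr 1
      refine congrArg (fun t => t ^ ((1:ℝ)/2)) ?_
      refine integral_congr_ae (Filter.Eventually.of_forall fun q => ?_)
      simp only [norm_norm]
  -- pointwise norm
  have hpt : ∀ q : Fin m → ℝ, ‖ψ q * bKer m h q z‖ = c * (‖ψ q‖ * G q) := by
    intro q
    rw [norm_mul, norm_bKer h hh, gauss_shift_eq (2*h) y q]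
    simp only [hcdef, hGdef]
    ring
  have hint : ∫ q : Fin m → ℝ, ‖ψ q * bKer m h q z‖ = c * ∫ q : Fin m → ℝ, ‖ψ q‖ * G q := by
    simp_rw [hpt]
    exact integral_const_mul c _
  have hKnn : (0:ℝ) ≤ P ^ (-(m:ℝ)/4) := Real.rpow_nonneg hP.le _
  calc ‖barg m h ψ z‖ = P ^ (-(m:ℝ)/4) * ‖∫ q : Fin m → ℝ, ψ q * bKer m h q z‖ := by
        rw [barg, norm_mul, Complex.norm_real, Real.norm_eq_abs, _root_.abs_of_nonneg hKnn]
    _ ≤ P ^ (-(m:ℝ)/4) * ∫ q : Fin m → ℝ, ‖ψ q * bKer m h q z‖ := by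
        gcongr
        exact norm_integral_le_integral_norm _
    _ = P ^ (-(m:ℝ)/4) * (c * ∫ q : Fin m → ℝ, ‖ψ q‖ * G q) := by rw [hint]
    _ ≤ P ^ (-(m:ℝ)/4) * (c * (Nψ * P ^ ((m:ℝ)/4))) := by
        gcongr
    _ = c * Nψ * (P ^ (-(m:ℝ)/4) * P ^ ((m:ℝ)/4)) := by ring
    _ = c * Nψ := by
        rw [← Real.rpow_add hP, show -(m:ℝ)/4 + (m:ℝ)/4 = 0 by ring, Real.rpow_zero, mul_one]

lemma hasDerivAt_bKer_update {m : ℕ} (h : ℝ) (q : Fin m → ℝ) (z : Fin m → ℂ)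
    (j : Fin m) (x : ℂ) :
    HasDerivAt (fun w => bKer m h q (Function.update z j w))
      (bKer m h q (Function.update z j x) *
        (-(1 / (4 * (h:ℂ))) * (4 * Complex.I * (q j : ℂ) - 2 * x))) x := by
  have hS1 : HasDerivAt (fun w : ℂ => ∑ k, (q k : ℂ) * Function.update z j w k) ((q j : ℂ)) x := by
    have step : ∀ k ∈ Finset.univ, HasDerivAt
        (fun w : ℂ => (q k : ℂ) * Function.update z j w k)
        (if k = j then (q k : ℂ) else 0) x := by
      intro k _
      rcases eq_or_ne k j with rfl | hk
      · simp only [Function.update_self, if_pos rfl]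
        simpa using (hasDerivAt_id x).const_mul ((q k : ℂ))
      · simp only [Function.update_of_ne hk, if_neg hk]
        exact hasDerivAt_const x _
    have := HasDerivAt.fun_sum step
    simpa using this
  have hS3 : HasDerivAt (fun w : ℂ => ∑ k, (Function.update z j w k)^2) (2 * x) x := by
    have step : ∀ k ∈ Finset.univ, HasDerivAt
        (fun w : ℂ => (Function.update z j w k)^2)
        (if k = j then 2 * x else 0) x := by
      intro k _
      rcases eq_or_ne k j with rfl | hk
      · simp only [Function.update_self, if_pos rfl]
        simpa [mul_comm] using (hasDerivAt_pow 2 x)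
      · simp only [Function.update_of_ne hk, if_neg hk]
        exact hasDerivAt_const x _
    have := HasDerivAt.fun_sum step
    simpa using this
  have hE : HasDerivAt (fun w : ℂ => -(1 / (4 * (h : ℂ))) *
      (4 * Complex.I * (∑ k, (q k : ℂ) * Function.update z j w k)
        + 2 * (∑ k, ((q k : ℂ))^2) - ∑ k, (Function.update z j w k)^2))
      (-(1 / (4 * (h:ℂ))) * (4 * Complex.I * (q j : ℂ) - 2 * x)) x := by
    have h1 : HasDerivAt (fun w : ℂ =>
        4 * Complex.I * (∑ k, (q k : ℂ) * Function.update z j w k)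
          + 2 * (∑ k, ((q k : ℂ))^2) - ∑ k, (Function.update z j w k)^2)
        (4 * Complex.I * (q j : ℂ) - 2 * x) x :=
      ((hS1.const_mul (4 * Complex.I)).add_const _).sub hS3
    exact h1.const_mul _
  have := (hE.cexp).const_mul (1:ℂ)
  simp only [one_mul] at this
  exact hE.cexp

-- bound on the sum of normSq over an updated vector
lemma sum_normSq_update_le {m : ℕ} (z : Fin m → ℂ) (j : Fin m) {x : ℂ} {R : ℝ}
    (hx : Complex.normSq x ≤ R) :
    ∑ k, Complex.normSq (Function.update z j x k) ≤ (∑ k, Complex.normSq (z k)) + R := by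
  have h1 : ∀ k, Complex.normSq (Function.update z j x k)
      = Function.update (fun k => Complex.normSq (z k)) j (Complex.normSq x) k := fun k =>
    (Function.apply_update (fun _ v => Complex.normSq v) z j x k)
  simp_rw [h1]
  rw [Finset.sum_update_of_mem (Finset.mem_univ j)]
  have h2 : ∑ k ∈ Finset.univ \ {j}, Complex.normSq (z k) ≤ ∑ k, Complex.normSq (z k) :=
    Finset.sum_le_sum_of_subset_of_nonneg (Finset.subset_univ _)
      (fun k _ _ => Complex.normSq_nonneg _)
  linarith

lemma kernel_bound {m : ℕ} (h : ℝ) (hh : 0 < h) (q : Fin m → ℝ) {z' : Fin m → ℂ} {S : ℝ}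
    (hz : ∑ k, Complex.normSq (z' k) ≤ S) :
    ‖bKer m h q z'‖ ≤ Real.exp (S/(4*h)) * Real.exp (S/(2*h))
      * Real.exp (-(1/(4*h)) * ∑ k, (q k)^2) := by
  rw [norm_bKer h hh]
  have h4 : (0:ℝ) < 4*h := by positivity
  have h2h : (0:ℝ) < 2*h := by positivity
  have hy : ∑ k, ((z' k).im)^2 ≤ S := by
    refine le_trans (Finset.sum_le_sum fun k _ => ?_) hz
    rw [Complex.normSq_apply]
    nlinarith [sq_nonneg (z' k).re]
  have hkey : (∑ k, (q k)^2)/2 - S ≤ ∑ k, (q k - (z' k).im)^2 := by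
    have : ∀ k ∈ Finset.univ, (q k)^2/2 - ((z' k).im)^2 ≤ (q k - (z' k).im)^2 := by
      intro k _
      nlinarith [sq_nonneg (q k - 2*(z' k).im)]
    have hsum := Finset.sum_le_sum this
    rw [Finset.sum_sub_distrib, ← Finset.sum_div] at hsum
    linarith
  have hb : -((∑ k, (q k - (z' k).im)^2)/(2*h)) ≤ S/(2*h) + (-(1/(4*h)) * ∑ k, (q k)^2) := by
    have heq : S/(2*h) + (-(1/(4*h)) * ∑ k, (q k)^2) = (S - (∑ k, (q k)^2)/2)/(2*h) := by
      field_simp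
      ring
    rw [heq, ← neg_div]
    exact (div_le_div_iff_of_pos_right h2h).mpr (by linarith)
  calc Real.exp ((∑ k, Complex.normSq (z' k)) / (4 * h))
        * Real.exp (-((∑ k, (q k - (z' k).im)^2) / (2 * h)))
      ≤ Real.exp (S/(4*h)) * Real.exp (S/(2*h) + (-(1/(4*h)) * ∑ k, (q k)^2)) := by
        have hza : (∑ k, Complex.normSq (z' k)) / (4 * h) ≤ S/(4*h) :=
          (div_le_div_iff_of_pos_right h4).mpr hz
        exact mul_le_mul (Real.exp_le_exp.2 hza) (Real.exp_le_exp.2 hb)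
          (Real.exp_nonneg _) (Real.exp_nonneg _)
    _ = Real.exp (S/(4*h)) * Real.exp (S/(2*h)) * Real.exp (-(1/(4*h)) * ∑ k, (q k)^2) := by
        rw [Real.exp_add]; ring

lemma poly_gauss_bound {m : ℕ} (h : ℝ) (hh : 0 < h) (q : Fin m → ℝ) (j : Fin m) {c₂ : ℝ}
    (hc₂ : 0 ≤ c₂) :
    (4*|q j| + c₂) * Real.exp (-(1/(4*h)) * ∑ k, (q k)^2)
      ≤ ((2 + c₂) * max 1 (8*h)) * Real.exp (-(1/(8*h)) * ∑ k, (q k)^2) := by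
  set M : ℝ := max 1 (8*h) with hM
  have hM1 : (1:ℝ) ≤ M := le_max_left _ _
  have hM8 : 8*h ≤ M := le_max_right _ _
  have hqj : (q j)^2 ≤ ∑ k, (q k)^2 :=
    Finset.single_le_sum (f := fun k => (q k)^2) (fun k _ => sq_nonneg _) (Finset.mem_univ j)
  have hsplit : Real.exp (-(1/(4*h)) * ∑ k, (q k)^2)
      = Real.exp (-(1/(8*h)) * ∑ k, (q k)^2) * Real.exp (-(1/(8*h)) * ∑ k, (q k)^2) := by
    rw [← Real.exp_add]
    congr 1
    field_simp
    ring
  rw [hsplit]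
  have hmain : (4*|q j| + c₂) * Real.exp (-(1/(8*h)) * ∑ k, (q k)^2) ≤ (2 + c₂) * M := by
    rw [neg_mul, Real.exp_neg]
    rw [mul_inv_le_iff₀ (Real.exp_pos _)]
    have hexp : 1 + (1/(8*h)) * (q j)^2 ≤ Real.exp ((1/(8*h)) * ∑ k, (q k)^2) := by
      have := Real.add_one_le_exp ((1/(8*h)) * ∑ k, (q k)^2)
      have hmono : (1/(8*h)) * (q j)^2 ≤ (1/(8*h)) * ∑ k, (q k)^2 := by
        have : (0:ℝ) < 1/(8*h) := by positivity
        nlinarith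
      linarith
    have h8 : (0:ℝ) < 8*h := by positivity
    have habs : |q j|^2 = (q j)^2 := sq_abs _
    have habs0 : 0 ≤ |q j| := abs_nonneg _
    have hMq : (q j)^2 ≤ M * ((1/(8*h)) * (q j)^2) := by
      rw [← mul_assoc]
      have : (1:ℝ) ≤ M * (1/(8*h)) := by
        calc (1:ℝ) = (8*h) * (1/(8*h)) := by field_simp
          _ ≤ M * (1/(8*h)) := by gcongr <;> positivity
      nlinarith [sq_nonneg (q j)]
    calc 4*|q j| + c₂ ≤ (2 + c₂) * (1 + (q j)^2) := by nlinarith [sq_nonneg (|q j| - 1)]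
      _ ≤ (2 + c₂) * (M * (1 + (1/(8*h)) * (q j)^2)) := by
          have : 1 + (q j)^2 ≤ M * (1 + (1/(8*h)) * (q j)^2) := by nlinarith
          nlinarith
      _ ≤ (2 + c₂) * (M * Real.exp ((1/(8*h)) * ∑ k, (q k)^2)) := by
          have hM0 : (0:ℝ) ≤ M := by linarith
          have h1q : (0:ℝ) ≤ 1 + (1/(8*h)) * (q j)^2 := by positivity
          gcongr
      _ = (2 + c₂) * M * Real.exp ((1/(8*h)) * ∑ k, (q k)^2) := by ring
  have hnn : (0:ℝ) ≤ Real.exp (-(1/(8*h)) * ∑ k, (q k)^2) := Real.exp_nonneg _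
  calc (4*|q j| + c₂) * (Real.exp (-(1/(8*h)) * ∑ k, (q k)^2)
        * Real.exp (-(1/(8*h)) * ∑ k, (q k)^2))
      = ((4*|q j| + c₂) * Real.exp (-(1/(8*h)) * ∑ k, (q k)^2))
        * Real.exp (-(1/(8*h)) * ∑ k, (q k)^2) := by ring
    _ ≤ ((2 + c₂) * M) * Real.exp (-(1/(8*h)) * ∑ k, (q k)^2) := by
        exact mul_le_mul_of_nonneg_right hmain hnn

lemma memLp_gauss {m : ℕ} {c : ℝ} (hc : 0 < c) :
    MemLp (fun q : Fin m → ℝ => Real.exp (-c * ∑ j, (q j)^2)) 2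
      (volume : Measure (Fin m → ℝ)) := by
  simpa using memLp_gauss_shift hc (0 : Fin m → ℝ)

lemma holoEach_barg {m : ℕ} (h : ℝ) (hh : 0 < h) {ψ : (Fin m → ℝ) → ℂ}
    (hψ : MemLp ψ 2 (volume : Measure (Fin m → ℝ))) : HoloEach (barg m h ψ) := by
  intro z j
  set x₀ := z j with hx₀def
  set S : ℝ := (∑ k, Complex.normSq (z k)) + (‖x₀‖+1)^2 with hSdef
  set c₂ : ℝ := 2*(‖x₀‖+1) with hc₂def
  have hc₂ : (0:ℝ) ≤ c₂ := by positivity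
  set M : ℝ := max 1 (8*h) with hMdef
  set Ka : ℝ := Real.exp (S/(4*h)) * Real.exp (S/(2*h)) * (1/(4*h)) * ((2 + c₂) * M)
    with hKadef
  have hKa : (0:ℝ) < Ka := by
    have hM1 : (1:ℝ) ≤ M := le_max_left _ _
    have : (0:ℝ) < (2 + c₂) * M := by nlinarith
    positivity
  set bound : (Fin m → ℝ) → ℝ :=
    fun q => ‖ψ q‖ * (Ka * Real.exp (-(1/(8*h)) * ∑ k, (q k)^2)) with hbddef
  set F : ℂ → (Fin m → ℝ) → ℂ :=
    fun w q => ψ q * bKer m h q (Function.update z j w) with hFdef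
  set F' : ℂ → (Fin m → ℝ) → ℂ := fun w q => ψ q * (bKer m h q (Function.update z j w) *
      (-(1 / (4 * (h:ℂ))) * (4 * Complex.I * (q j : ℂ) - 2 * w))) with hF'def
  have hcont_d : ∀ w : ℂ, Continuous (fun q : Fin m → ℝ =>
      bKer m h q (Function.update z j w) *
        (-(1 / (4 * (h:ℂ))) * (4 * Complex.I * (q j : ℂ) - 2 * w))) := by
    intro w
    exact (continuous_bKer_q h _).mul (by fun_prop)
  have h_bound : ∀ q : Fin m → ℝ, ∀ x ∈ Metric.ball x₀ 1, ‖F' x q‖ ≤ bound q := by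
    intro q x hx
    have hxn : ‖x‖ ≤ ‖x₀‖ + 1 := by
      have h1 : ‖x - x₀‖ < 1 := mem_ball_iff_norm.mp hx
      have h2 : ‖x‖ - ‖x₀‖ ≤ ‖x - x₀‖ := norm_sub_norm_le x x₀
      linarith
    have hsum : ∑ k, Complex.normSq (Function.update z j x k) ≤ S := by
      refine sum_normSq_update_le z j ?_
      rw [Complex.normSq_eq_norm_sq]
      have : (0:ℝ) ≤ ‖x‖ := norm_nonneg _
      nlinarith
    have hker := kernel_bound h hh q hsum
    have hd : ‖(-(1 / (4 * (h:ℂ))) * (4 * Complex.I * (q j : ℂ) - 2 * x))‖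
        ≤ (1/(4*h)) * (4*|q j| + c₂) := by
      rw [norm_mul]
      have e1 : ‖(-(1 / (4 * (h:ℂ))))‖ = 1/(4*h) := by
        rw [norm_neg, show (1 / (4 * (h:ℂ))) = (((1/(4*h):ℝ)):ℂ) by push_cast; ring,
          Complex.norm_real, Real.norm_eq_abs, _root_.abs_of_pos (by positivity)]
      rw [e1]
      have e2 : ‖4 * Complex.I * ((q j : ℂ)) - 2 * x‖ ≤ 4*|q j| + c₂ := by
        refine le_trans (norm_sub_le _ _) ?_
        have e3 : ‖4 * Complex.I * ((q j : ℂ))‖ = 4 * |q j| := by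
          simp [norm_mul, Complex.norm_real]
        have e4 : ‖2 * x‖ ≤ c₂ := by
          rw [norm_mul]
          simp only [Complex.norm_ofNat]
          rw [hc₂def]
          nlinarith
        linarith [le_of_eq e3]
      have : (0:ℝ) ≤ 1/(4*h) := by positivity
      exact mul_le_mul_of_nonneg_left e2 this
    calc ‖F' x q‖ = ‖ψ q‖ * (‖bKer m h q (Function.update z j x)‖
          * ‖(-(1 / (4 * (h:ℂ))) * (4 * Complex.I * (q j : ℂ) - 2 * x))‖) := by
          rw [hF'def]; simp only [norm_mul]
      _ ≤ ‖ψ q‖ * ((Real.exp (S/(4*h)) * Real.exp (S/(2*h))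
            * Real.exp (-(1/(4*h)) * ∑ k, (q k)^2)) * ((1/(4*h)) * (4*|q j| + c₂))) := by
          refine mul_le_mul_of_nonneg_left ?_ (norm_nonneg _)
          exact mul_le_mul hker hd (norm_nonneg _) (by positivity)
      _ = ‖ψ q‖ * ((Real.exp (S/(4*h)) * Real.exp (S/(2*h)) * (1/(4*h)))
            * ((4*|q j| + c₂) * Real.exp (-(1/(4*h)) * ∑ k, (q k)^2))) := by ring
      _ ≤ ‖ψ q‖ * ((Real.exp (S/(4*h)) * Real.exp (S/(2*h)) * (1/(4*h)))
            * (((2 + c₂) * M) * Real.exp (-(1/(8*h)) * ∑ k, (q k)^2))) := by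
          refine mul_le_mul_of_nonneg_left ?_ (norm_nonneg _)
          refine mul_le_mul_of_nonneg_left ?_ (by positivity)
          exact poly_gauss_bound h hh q j hc₂
      _ = bound q := by rw [hbddef, hKadef]; ring
  have hbd_int : Integrable bound (volume : Measure (Fin m → ℝ)) := by
    have hK : MemLp (fun q : Fin m → ℝ => Ka * Real.exp (-(1/(8*h)) * ∑ k, (q k)^2)) 2
        (volume : Measure (Fin m → ℝ)) := (memLp_gauss (by positivity)).const_mul Ka
    have hgi := integrable_norm_mul_norm hψ hK
    have heq : (fun q : Fin m → ℝ => ‖ψ q‖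
        * ‖Ka * Real.exp (-(1/(8*h)) * ∑ k, (q k)^2)‖) = bound := by
      funext q
      rw [hbddef, Real.norm_eq_abs, _root_.abs_of_pos (by positivity)]
    rwa [heq] at hgi
  have hres := hasDerivAt_integral_of_dominated_loc_of_deriv_le
    (F := F) (F' := F') (x₀ := x₀) (bound := bound)
    (Metric.ball_mem_nhds x₀ one_pos)
    (Filter.Eventually.of_forall fun w =>
      hψ.1.mul (continuous_bKer_q h (Function.update z j w)).aestronglyMeasurable)
    (integrable_psi_bKer h hh hψ (Function.update z j x₀))
    (hψ.1.mul (hcont_d x₀).aestronglyMeasurable)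
    (Filter.Eventually.of_forall fun q x hxmem => h_bound q x hxmem)
    hbd_int
    (Filter.Eventually.of_forall fun q x _ =>
      (hasDerivAt_bKer_update h q z j x).const_mul (ψ q))
  have hD : DifferentiableAt ℂ (fun w : ℂ => ∫ q : Fin m → ℝ, F w q) x₀ :=
    hres.2.differentiableAt
  have hfun : (fun w : ℂ => barg m h ψ (Function.update z j w))
      = fun w : ℂ => (((Real.pi * h) ^ (-(m : ℝ) / 4) : ℝ) : ℂ)
        * ∫ q : Fin m → ℝ, F w q := rfl
  rw [hfun]
  exact hD.const_mul _

/-- For `ψ ∈ L²(ℝ^m)` the Bargmann transform is everywhere defined by an absolutely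
convergent integral, holomorphic, and satisfies `|B(ψ)(z)| ≤ e^{|z|²/(4ℏ)}‖ψ‖₂`. -/
theorem statement12 (m : ℕ) (hm : 1 ≤ m) (h : ℝ) (hh : 0 < h)
    (ψ : (Fin m → ℝ) → ℂ) (hψ : MemLp ψ 2 (volume : Measure (Fin m → ℝ))) :
    (∀ z : Fin m → ℂ, Integrable (fun q : Fin m → ℝ => ψ q * bKer m h q z)) ∧
    HoloEach (barg m h ψ) ∧
    (∀ z : Fin m → ℂ,
      ‖barg m h ψ z‖ ≤ Real.exp ((∑ j, Complex.normSq (z j)) / (4 * h)) *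
        (eLpNorm ψ 2 (volume : Measure (Fin m → ℝ))).toReal) :=
  ⟨fun z => integrable_psi_bKer h hh hψ z, holoEach_barg h hh hψ,
    fun z => norm_barg_le h hh hψ z⟩
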